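/- arXiv:1102.2350 — 2 statements merged into one kernel-verified Lean document; each statement's English description precedes it below -/
import Mathlib

section
/- Let v ∈ F_q^k be a vector of full support, n ≥ k+1, and let E_{n,k,v} = {(x, x·v, 0, ..., 0) : x ∈ F_q^k} ⊆ F_q^n. Then for each i with 0 ≤ i ≤ n, the number of codewords of E_{n,k,v} of Hamming weight i equals (1/q)·C(k+1, i)·[(q-1)^i + (q-1)(-1)^i], where C(k+1,i) is the binomial coefficient. -/
open scoped Classical

/-- Number of codewords of Hamming weight `i`: the weight distribution `A_i(C)`. -/
noncomputable def weightCount {F : Type*} [Field F] [Fintype F] {n : ℕ}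
    (C : Submodule F (Fin n → F)) (i : ℕ) : ℕ :=
  (Finset.univ.filter (fun c : C => hammingNorm (c : Fin n → F) = i)).card

/-- The linear map `x ↦ (x, x·v, 0, ..., 0)`. -/
noncomputable def Emap (F : Type*) [Field F] (n k : ℕ) (v : Fin k → F) :
    (Fin k → F) →ₗ[F] (Fin n → F) where
  toFun x := fun i =>
    if h : (i : ℕ) < k then x ⟨i, h⟩
    else if (i : ℕ) = k then ∑ j, x j * v j else 0
  map_add' x y := by
    funext i
    by_cases h : (i : ℕ) < k
    · simp [h]
    · by_cases h2 : (i : ℕ) = k <;> simp [h, h2, add_mul, Finset.sum_add_distrib]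
  map_smul' t x := by
    funext i
    by_cases h : (i : ℕ) < k
    · simp [h]
    · by_cases h2 : (i : ℕ) = k <;> simp [h, h2, Finset.mul_sum, mul_assoc]

/-- The code `E_{n,k,v} = {(x, x·v, 0, ..., 0) : x ∈ F_q^k}`. -/
noncomputable def Ecode (F : Type*) [Field F] (n k : ℕ) (v : Fin k → F) :
    Submodule F (Fin n → F) :=
  LinearMap.range (Emap F n k v)

section Aux

open Finset

set_option linter.unusedSectionVars false

variable {F : Type*} [Field F] [Fintype F]

lemma hammingNorm_eq_sum {m : ℕ} (y : Fin m → F) :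
    hammingNorm y = ∑ i, if y i = 0 then 0 else 1 := by
  rw [hammingNorm, Finset.card_filter]
  congr 1
  funext i
  by_cases h : y i = 0 <;> simp [h]

lemma hammingNorm_cons {m : ℕ} (a : F) (z : Fin m → F) :
    hammingNorm (Fin.cons a z : Fin (m+1) → F) =
      (if a = 0 then 0 else 1) + hammingNorm z := by
  rw [hammingNorm_eq_sum, Fin.sum_univ_succ, hammingNorm_eq_sum]
  simp

lemma card_split {α : Type*} [Fintype α] (P A : α → Prop)
    [DecidablePred P] [DecidablePred A] :
    (univ.filter P).card =
      (univ.filter (fun y => P y ∧ A y)).card +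
      (univ.filter (fun y => P y ∧ ¬ A y)).card := by
  rw [← Finset.filter_filter, ← Finset.filter_filter,
    Finset.card_filter_add_card_filter_not (s := univ.filter P) (p := A)]

lemma norm_fin_zero (y : Fin 0 → F) : hammingNorm y = 0 := by
  simp [hammingNorm]

lemma card_nonzero : (univ.filter (fun a : F => ¬ a = 0)).card = Fintype.card F - 1 := by
  have h0 : (univ.filter (fun a : F => a = 0)) = {0} := by ext a; simp
  rw [Finset.filter_not, Finset.card_sdiff_of_subset (by rw [h0]; intro a ha; simp), h0]
  simp [Finset.card_univ]

lemma card_wt (m i : ℕ) :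
    (univ.filter (fun y : Fin m → F => hammingNorm y = i)).card
      = m.choose i * (Fintype.card F - 1)^i := by
  induction m generalizing i with
  | zero =>
    rcases i with _ | i
    · rw [Finset.filter_true_of_mem (fun y _ => norm_fin_zero y)]
      simp
    · rw [Finset.filter_false_of_mem (fun y _ => by rw [norm_fin_zero y]; omega)]
      simp
  | succ m ih =>
    rcases i with _ | i
    · rw [Nat.choose_zero_right, pow_zero, mul_one]
      rw [Finset.card_eq_one]
      refine ⟨0, ?_⟩
      ext y
      simp [hammingNorm_eq_zero]
    · rw [card_split (fun y : Fin (m+1) → F => hammingNorm y = i + 1) (fun y => y 0 = 0)]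
      have h1 : (univ.filter (fun y : Fin (m+1) → F => hammingNorm y = i + 1 ∧ y 0 = 0)).card
          = (univ.filter (fun z : Fin m → F => hammingNorm z = i + 1)).card := by
        refine Finset.card_nbij' (fun y => Fin.tail y) (fun z => Fin.cons 0 z) ?_ ?_ ?_ ?_
        · intro y hy
          simp only [Finset.mem_coe, mem_filter, mem_univ, true_and] at hy ⊢
          have := hy.1
          rw [← Fin.cons_self_tail y, hy.2, hammingNorm_cons] at this
          simpa using this
        · intro z hz
          simp only [Finset.mem_coe, mem_filter, mem_univ, true_and] at hz ⊢
          rw [hammingNorm_cons]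
          simpa using hz
        · intro y hy
          simp only [Finset.mem_coe, mem_filter, mem_univ, true_and] at hy
          rw [← hy.2]
          exact Fin.cons_self_tail y
        · intro z hz
          simp
      have h2 : (univ.filter (fun y : Fin (m+1) → F => hammingNorm y = i + 1 ∧ ¬ y 0 = 0)).card
          = ((univ.filter (fun a : F => ¬ a = 0)) ×ˢ
              (univ.filter (fun z : Fin m → F => hammingNorm z = i))).card := by
        refine Finset.card_nbij' (fun y => (y 0, Fin.tail y))
          (fun p => Fin.cons p.1 p.2) ?_ ?_ ?_ ?_
        · intro y hy
          simp only [Finset.mem_coe, mem_filter, mem_univ, true_and, Finset.mem_product] at hy ⊢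
          refine ⟨hy.2, ?_⟩
          have hcons := hammingNorm_cons (y 0) (Fin.tail y)
          rw [Fin.cons_self_tail, hy.1, if_neg hy.2] at hcons
          clear ih h1; omega
        · intro p hp
          simp only [Finset.mem_coe, mem_filter, mem_univ, true_and, Finset.mem_product] at hp ⊢
          constructor
          · rw [hammingNorm_cons, if_neg hp.1, hp.2]; exact Nat.add_comm 1 i
          · simpa using hp.1
        · intro y hy
          exact Fin.cons_self_tail y
        · intro p hp
          simp
      rw [h1, h2, Finset.card_product, ih, ih, card_nonzero, Nat.choose_succ_succ]
      ring

lemma key (m : ℕ) (w : Fin m → F) (hw : ∀ j, w j ≠ 0) (i : ℕ) :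
    (Fintype.card F : ℤ) *
      ((univ.filter (fun y : Fin m → F =>
          hammingNorm y = i ∧ ∑ j, y j * w j = 0)).card : ℤ)
      = (m.choose i : ℤ) *
        (((Fintype.card F : ℤ) - 1)^i + (-1 : ℤ)^i * ((Fintype.card F : ℤ) - 1)) := by
  induction m generalizing i with
  | zero =>
    rcases i with _ | i
    · rw [Finset.filter_true_of_mem (fun y _ => ⟨norm_fin_zero y, by simp⟩)]
      simp [Finset.card_univ]
    · rw [Finset.filter_false_of_mem (fun y _ h => by
        have := norm_fin_zero y; omega)]
      simp
  | succ m ih =>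
    have hw' : ∀ j, Fin.tail w j ≠ 0 := fun j => hw j.succ
    rcases i with _ | i
    · have hfil : (univ.filter (fun y : Fin (m+1) → F =>
          hammingNorm y = 0 ∧ ∑ j, y j * w j = 0)) = {0} := by
        ext y
        simp only [Finset.mem_coe, mem_filter, mem_univ, true_and, Finset.mem_singleton,
          hammingNorm_eq_zero]
        constructor
        · exact fun h => h.1
        · rintro rfl; simp
      rw [hfil]
      simp
    · -- split on y 0 = 0
      rw [card_split (fun y : Fin (m+1) → F =>
          hammingNorm y = i + 1 ∧ ∑ j, y j * w j = 0) (fun y => y 0 = 0)]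
      -- part A
      have hA : (univ.filter (fun y : Fin (m+1) → F =>
            (hammingNorm y = i + 1 ∧ ∑ j, y j * w j = 0) ∧ y 0 = 0)).card
          = (univ.filter (fun z : Fin m → F =>
            hammingNorm z = i + 1 ∧ ∑ j, z j * Fin.tail w j = 0)).card := by
        refine Finset.card_nbij' (fun y => Fin.tail y) (fun z => Fin.cons 0 z) ?_ ?_ ?_ ?_
        · intro y hy
          simp only [Finset.mem_coe, mem_filter, mem_univ, true_and] at hy ⊢
          obtain ⟨⟨h1, h2⟩, h0⟩ := hy
          have hcons := hammingNorm_cons (y 0) (Fin.tail y)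
          rw [Fin.cons_self_tail, h1, if_pos h0] at hcons
          refine ⟨by clear ih h2; omega, ?_⟩
          rw [Fin.sum_univ_succ, h0, zero_mul, zero_add] at h2
          simpa [Fin.tail] using h2
        · intro z hz
          simp only [Finset.mem_coe, mem_filter, mem_univ, true_and] at hz ⊢
          refine ⟨⟨?_, ?_⟩, by simp⟩
          · rw [hammingNorm_cons]; simpa using hz.1
          · rw [Fin.sum_univ_succ]
            simpa [Fin.tail] using hz.2
        · intro y hy
          simp only [Finset.mem_coe, mem_filter, mem_univ, true_and] at hy
          rw [← hy.2]
          exact Fin.cons_self_tail y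
        · intro z _; simp
      -- part B
      have hB : (univ.filter (fun y : Fin (m+1) → F =>
            (hammingNorm y = i + 1 ∧ ∑ j, y j * w j = 0) ∧ ¬ y 0 = 0)).card
          = (univ.filter (fun z : Fin m → F =>
            hammingNorm z = i ∧ ¬ ∑ j, z j * Fin.tail w j = 0)).card := by
        refine Finset.card_nbij' (fun y => Fin.tail y)
          (fun z => Fin.cons (-(∑ j, z j * Fin.tail w j) / w 0) z) ?_ ?_ ?_ ?_
        · intro y hy
          simp only [Finset.mem_coe, mem_filter, mem_univ, true_and] at hy ⊢
          obtain ⟨⟨h1, h2⟩, h0⟩ := hy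
          have hcons := hammingNorm_cons (y 0) (Fin.tail y)
          rw [Fin.cons_self_tail, h1, if_neg h0] at hcons
          rw [Fin.sum_univ_succ] at h2
          have hs : (∑ j, Fin.tail y j * Fin.tail w j) = - (y 0 * w 0) := by
            rw [eq_neg_iff_add_eq_zero]
            rw [← h2]
            simp [Fin.tail]
            ring
          refine ⟨by clear ih h2 hs hA; omega, ?_⟩
          rw [hs]
          simp only [neg_eq_zero, mul_eq_zero, not_or]
          exact ⟨h0, hw 0⟩
        · intro z hz
          simp only [Finset.mem_coe, mem_filter, mem_univ, true_and] at hz ⊢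
          obtain ⟨h1, h2⟩ := hz
          have ha : (-(∑ j, z j * Fin.tail w j) / w 0) ≠ 0 := by
            apply div_ne_zero _ (hw 0)
            simpa using h2
          refine ⟨⟨?_, ?_⟩, ?_⟩
          · rw [hammingNorm_cons, if_neg ha, h1]; exact Nat.add_comm 1 i
          · rw [Fin.sum_univ_succ]
            simp only [Fin.cons_zero, Fin.cons_succ]
            rw [div_mul_cancel₀ _ (hw 0)]
            have : (∑ j : Fin m, z j * w j.succ) = ∑ j, z j * Fin.tail w j := by
              simp [Fin.tail]
            rw [this]
            ring
          · simpa using ha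
        · intro y hy
          simp only [Finset.mem_coe, mem_filter, mem_univ, true_and] at hy
          obtain ⟨⟨h1, h2⟩, h0⟩ := hy
          rw [Fin.sum_univ_succ] at h2
          have hs : (∑ j, Fin.tail y j * Fin.tail w j) = - (y 0 * w 0) := by
            rw [eq_neg_iff_add_eq_zero, ← h2]
            simp [Fin.tail]
            ring
          have hval : -(∑ j, Fin.tail y j * Fin.tail w j) / w 0 = y 0 := by
            rw [hs, neg_neg, mul_div_assoc, div_self (hw 0), mul_one]
          show Fin.cons ((-∑ j, Fin.tail y j * Fin.tail w j) / w 0) (Fin.tail y) = y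
          rw [hval]
          exact Fin.cons_self_tail y
        · intro z _; simp
      -- split the i-weight count
      have hsplit : (univ.filter (fun z : Fin m → F => hammingNorm z = i)).card
          = (univ.filter (fun z : Fin m → F =>
              hammingNorm z = i ∧ ∑ j, z j * Fin.tail w j = 0)).card
            + (univ.filter (fun z : Fin m → F =>
              hammingNorm z = i ∧ ¬ ∑ j, z j * Fin.tail w j = 0)).card :=
        card_split _ _
      have e1 := ih (Fin.tail w) hw' (i+1)
      have e2 := ih (Fin.tail w) hw' i
      have e3 := card_wt (F := F) m i
      have hq1 : 1 ≤ Fintype.card F := Fintype.card_pos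
      rw [hA, hB, Nat.choose_succ_succ]
      have hBval : ((univ.filter (fun z : Fin m → F =>
              hammingNorm z = i ∧ ¬ ∑ j, z j * Fin.tail w j = 0)).card : ℤ)
          = ((m.choose i * (Fintype.card F - 1)^i : ℕ) : ℤ)
            - ((univ.filter (fun z : Fin m → F =>
              hammingNorm z = i ∧ ∑ j, z j * Fin.tail w j = 0)).card : ℤ) := by
        rw [← e3, hsplit]; push_cast; ring
      have e3' := congrArg (Nat.cast (R := ℤ)) e3
      push_cast [Nat.cast_sub hq1] at hBval e1 e2 e3' ⊢
      rw [mul_add, hBval]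
      linear_combination e1 - e2

/-- extension by zero -/
noncomputable def extz (n m : ℕ) (h : m ≤ n) (y : Fin m → F) : Fin n → F :=
  fun i => if hi : (i : ℕ) < m then y ⟨i, hi⟩ else 0

lemma hammingNorm_extz (n m : ℕ) (h : m ≤ n) (y : Fin m → F) :
    hammingNorm (extz n m h y) = hammingNorm y := by
  rw [hammingNorm, hammingNorm]
  have hlt : ∀ i : Fin n, i ∈ univ.filter (fun i => extz n m h y i ≠ 0) → (i : ℕ) < m := by
    intro i hi
    simp only [Finset.mem_coe, mem_filter, mem_univ, true_and] at hi; simp only [extz] at hi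
    by_contra hc
    exact hi (dif_neg hc)
  refine Finset.card_bij' (fun i hi => (⟨(i : ℕ), hlt i hi⟩ : Fin m))
    (fun j _ => Fin.castLE h j) ?_ ?_ ?_ ?_
  · intro i hi
    have hm := hlt i hi
    simp only [Finset.mem_coe, mem_filter, mem_univ, true_and] at hi ⊢; simp only [extz] at hi ⊢
    rw [dif_pos hm] at hi
    exact hi
  · intro j hj
    simp only [Finset.mem_coe, mem_filter, mem_univ, true_and] at hj ⊢; simp only [extz] at hj ⊢
    rcases j with ⟨j, hjm⟩
    rw [dif_pos (by simpa using hjm)]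
    exact hj
  · intro i _; rcases i with ⟨i, _⟩; rfl
  · intro j _; rcases j with ⟨j, _⟩; rfl

lemma Emap_eq_extz {n k : ℕ} (hkn : k + 1 ≤ n) (v : Fin k → F) (x : Fin k → F) :
    Emap F n k v x = extz n (k+1) hkn (Fin.snoc x (∑ j, x j * v j)) := by
  funext i
  rcases i with ⟨i, hin⟩
  simp only [Emap, LinearMap.coe_mk, AddHom.coe_mk, extz]
  by_cases h1 : i < k
  · rw [dif_pos h1, dif_pos (by omega)]
    have : (⟨i, by omega⟩ : Fin (k+1)) = Fin.castSucc ⟨i, h1⟩ := rfl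
    rw [this, Fin.snoc_castSucc]
  · by_cases h2 : i = k
    · rw [dif_neg h1, if_pos h2, dif_pos (by omega)]
      have : (⟨i, by omega⟩ : Fin (k+1)) = Fin.last k := by
        ext; simpa using h2
      rw [this, Fin.snoc_last]
    · rw [dif_neg h1, if_neg h2, dif_neg (by omega)]

lemma snoc_sum (k : ℕ) (v : Fin k → F) (x : Fin k → F) (s : F) :
    (∑ j : Fin (k+1), Fin.snoc x s j * Fin.snoc v (-1 : F) j)
      = (∑ j, x j * v j) - s := by
  rw [Fin.sum_univ_castSucc]
  simp [Fin.snoc_castSucc, Fin.snoc_last]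
  ring

lemma Emap_inj {n k : ℕ} (hkn : k + 1 ≤ n) (v : Fin k → F) :
    Function.Injective (Emap F n k v) := by
  intro x x' hxx
  funext j
  have hj : (j : ℕ) < n := by have := j.2; omega
  have h := congrFun hxx ⟨(j : ℕ), hj⟩
  simp only [Emap, LinearMap.coe_mk, AddHom.coe_mk] at h
  rw [dif_pos j.2, dif_pos j.2] at h
  simpa using h

end Aux

/-- The weight distribution of `E_{n,k,v}` for `v` of full support:
`A_i(E_{n,k,v}) = (1/q)·C(k+1,i)·[(q-1)^i + (q-1)(-1)^i]`. -/
theorem weightCount_Ecode {F : Type*} [Field F] [Fintype F] {n k q : ℕ}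
    (hq : Fintype.card F = q) (hkn : k + 1 ≤ n)
    (v : Fin k → F) (hv : ∀ j, v j ≠ 0) :
    ∀ i : ℕ, i ≤ n →
      (weightCount (Ecode F n k v) i : ℝ) =
        (1 / (q : ℝ)) * (Nat.choose (k + 1) i : ℝ) *
          (((q : ℝ) - 1) ^ i + ((q : ℝ) - 1) * (-1 : ℝ) ^ i) := by
  subst hq
  intro i _
  classical
  -- step 1: weightCount as a count over x
  have h1 : weightCount (Ecode F n k v) i
      = (Finset.univ.filter
          (fun x : Fin k → F => hammingNorm (Emap F n k v x) = i)).card := by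
    rw [weightCount, ← Fintype.card_subtype, ← Fintype.card_subtype]
    exact Fintype.card_congr
      ((Equiv.subtypeEquiv (LinearEquiv.ofInjective (Emap F n k v)
          (Emap_inj hkn v)).toEquiv
        (fun x => by
          rw [LinearEquiv.coe_toEquiv]
          rw [show ((LinearEquiv.ofInjective (Emap F n k v) (Emap_inj hkn v) x :
              Ecode F n k v) : Fin n → F) = Emap F n k v x from rfl])).symm)
  -- step 2: bijection with parity-check words of length k+1
  have h2 : (Finset.univ.filter
          (fun x : Fin k → F => hammingNorm (Emap F n k v x) = i)).card
      = (Finset.univ.filter (fun y : Fin (k+1) → F =>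
          hammingNorm y = i ∧ ∑ j, y j * (Fin.snoc v (-1 : F) : Fin (k+1) → F) j = 0)).card := by
    refine Finset.card_nbij' (fun x => Fin.snoc x (∑ j, x j * v j))
      (fun y => Fin.init y) ?_ ?_ ?_ ?_
    · intro x hx
      simp only [Finset.mem_coe, Finset.mem_filter, Finset.mem_univ, true_and] at hx ⊢
      constructor
      · rw [← hx, Emap_eq_extz hkn, hammingNorm_extz]
      · rw [snoc_sum]; ring
    · intro y hy
      simp only [Finset.mem_coe, Finset.mem_filter, Finset.mem_univ, true_and] at hy ⊢
      obtain ⟨h1', h2'⟩ := hy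
      have hlast : y (Fin.last k) = ∑ j, Fin.init y j * v j := by
        have hh := h2'
        rw [← Fin.snoc_init_self y, snoc_sum] at hh
        exact (sub_eq_zero.mp hh).symm
      have hsnoc : Fin.snoc (Fin.init y) (∑ j, Fin.init y j * v j) = y := by
        rw [← hlast]
        exact Fin.snoc_init_self y
      rw [Emap_eq_extz hkn, hammingNorm_extz, hsnoc, h1']
    · intro x _
      simp
    · intro y hy
      simp only [Finset.mem_coe, Finset.mem_filter, Finset.mem_univ, true_and] at hy
      obtain ⟨h1', h2'⟩ := hy
      have hlast : y (Fin.last k) = ∑ j, Fin.init y j * v j := by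
        rw [← Fin.snoc_init_self y, snoc_sum] at h2'
        exact (sub_eq_zero.mp h2').symm
      show Fin.snoc (Fin.init y) (∑ j, Fin.init y j * v j) = y
      rw [← hlast]
      exact Fin.snoc_init_self y
  -- step 3: apply key lemma
  have hw : ∀ j : Fin (k+1), (Fin.snoc v (-1 : F) : Fin (k+1) → F) j ≠ 0 := by
    intro j
    induction j using Fin.lastCases with
    | last => rw [Fin.snoc_last]; norm_num
    | cast j' => rw [Fin.snoc_castSucc]; exact hv j'
  have h3 := key (k+1) (Fin.snoc v (-1 : F)) hw i
  rw [h1, h2]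
  have hq0 : (Fintype.card F : ℝ) ≠ 0 := Nat.cast_ne_zero.mpr Fintype.card_ne_zero
  have h3' : (Fintype.card F : ℝ) *
      ((Finset.univ.filter (fun y : Fin (k+1) → F =>
          hammingNorm y = i ∧ ∑ j, y j * (Fin.snoc v (-1 : F) : Fin (k+1) → F) j = 0)).card : ℝ)
      = ((k+1).choose i : ℝ) *
        (((Fintype.card F : ℝ) - 1)^i + (-1 : ℝ)^i * ((Fintype.card F : ℝ) - 1)) := by
    exact_mod_cast congrArg (fun z : ℤ => (z : ℝ)) h3
  field_simp
  linear_combination h3'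
end

section
/- Let v ∈ F_q^k be a vector of full support, n ≥ k+1, E_{n,k,v} = {(x, x·v, 0, ..., 0) : x ∈ F_q^k} ⊆ F_q^n, and let 2 ≤ j ≤ k+1. Then Σ_{i=2}^j A_i(E_{n,k,v}) = Σ_{i=1}^{j-1} C(k,i)(q-1)^i + (1/q)·C(k,j)·[(q-1)^j + (-1)^j (q-1)]. -/
open scoped Classical

lemma card_supp_eq {F : Type*} [Field F] [Fintype F] {k : ℕ} (s : Finset (Fin k)) :
    (Finset.univ.filter fun x : Fin k → F => ∀ i, x i ≠ 0 ↔ i ∈ s).card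
      = (Fintype.card F - 1) ^ s.card := by
  have h1 : (Finset.univ.filter fun x : Fin k → F => ∀ i, x i ≠ 0 ↔ i ∈ s)
      = Fintype.piFinset (fun i => if i ∈ s then ({0} : Finset F)ᶜ else {0}) := by
    ext x
    simp only [Finset.mem_filter, Finset.mem_univ, true_and, Fintype.mem_piFinset]
    constructor
    · intro h i
      by_cases hi : i ∈ s
      · simp [hi, Finset.mem_compl, (h i).2 hi]
      · have : x i = 0 := by by_contra hx; exact hi ((h i).1 hx)
        simp [hi, this]
    · intro h i
      by_cases hi : i ∈ s
      · have := h i; simp [hi, Finset.mem_compl] at this; simp [hi, this]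
      · have := h i; simp [hi] at this; simp [hi, this]
  rw [h1, Fintype.card_piFinset]
  have h2 : ∀ i : Fin k, (if i ∈ s then ({0} : Finset F)ᶜ else {0}).card
      = if i ∈ s then Fintype.card F - 1 else 1 := by
    intro i
    by_cases hi : i ∈ s <;> simp [hi, Finset.card_compl]
  simp only [h2]
  rw [Fintype.prod_ite_mem s (fun _ => Fintype.card F - 1), Finset.prod_const]



lemma card_supp_dot_eq {F : Type*} [Field F] [Fintype F] {k : ℕ}
    (v : Fin k → F) (hv : ∀ j, v j ≠ 0) (s : Finset (Fin k)) :
    (Fintype.card F : ℤ) *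
      (Finset.univ.filter fun x : Fin k → F =>
        (∀ i, x i ≠ 0 ↔ i ∈ s) ∧ ∑ i, x i * v i = 0).card
      = ((Fintype.card F : ℤ) - 1) ^ s.card
        + (-1) ^ s.card * ((Fintype.card F : ℤ) - 1) := by
  induction s using Finset.induction_on with
  | empty =>
    have : (Finset.univ.filter fun x : Fin k → F =>
        (∀ i, x i ≠ 0 ↔ i ∈ (∅ : Finset (Fin k))) ∧ ∑ i, x i * v i = 0) = {fun _ => 0} := by
      ext x
      simp only [Finset.mem_filter, Finset.mem_univ, true_and, Finset.notMem_empty,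
        iff_false, not_not, Finset.mem_singleton]
      constructor
      · intro h; funext i; exact h.1 i
      · intro h; subst h; simp
    rw [this]; simp
  | @insert a s ha ih =>
    -- bijection: P ↔ Q
    have hbij : (Finset.univ.filter fun x : Fin k → F =>
          (∀ i, x i ≠ 0 ↔ i ∈ insert a s) ∧ ∑ i, x i * v i = 0).card
        = (Finset.univ.filter fun x : Fin k → F =>
          (∀ i, x i ≠ 0 ↔ i ∈ s) ∧ ∑ i, x i * v i ≠ 0).card := by
      apply Finset.card_bij' (fun x _ => Function.update x a 0)
        (fun y _ => Function.update y a (-(∑ i, y i * v i) / v a))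
      · intro x hx
        simp only [Finset.mem_filter, Finset.mem_univ, true_and] at hx ⊢
        obtain ⟨hsupp, hdot⟩ := hx
        have hxa : x a ≠ 0 := (hsupp a).2 (Finset.mem_insert_self a s)
        have hsum : ∑ i, Function.update x a 0 i * v i = - (x a * v a) := by
          rw [show (fun i => Function.update x a 0 i * v i)
              = Function.update (fun i => x i * v i) a 0 from ?_]
          · rw [Finset.sum_update_of_mem (Finset.mem_univ a)]
            have := Finset.sum_eq_sum_sdiff_singleton_add (Finset.mem_univ a)
              (fun i => x i * v i)
            rw [this] at hdot
            linear_combination hdot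
          · funext i
            by_cases hia : i = a
            · subst hia; simp
            · simp [Function.update_of_ne hia]
        constructor
        · intro i
          by_cases hia : i = a
          · subst hia; simp [ha]
          · simp only [Function.update_of_ne hia]
            rw [hsupp i, Finset.mem_insert]
            simp [hia]
        · rw [hsum]
          simp [hxa, hv a]
      · intro y hy
        simp only [Finset.mem_filter, Finset.mem_univ, true_and] at hy ⊢
        obtain ⟨hsupp, hdot⟩ := hy
        have hya : y a = 0 := by
          by_contra h; exact ha ((hsupp a).1 h)
        set c := -(∑ i, y i * v i) / v a with hc
        have hcne : c ≠ 0 := by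
          rw [hc]; exact div_ne_zero (neg_ne_zero.2 hdot) (hv a)
        have hsum : ∑ i, Function.update y a c i * v i = 0 := by
          rw [show (fun i => Function.update y a c i * v i)
              = Function.update (fun i => y i * v i) a (c * v a) from ?_]
          · rw [Finset.sum_update_of_mem (Finset.mem_univ a)]
            have h2 := Finset.sum_eq_sum_sdiff_singleton_add (Finset.mem_univ a)
              (fun i => y i * v i)
            have : c * v a = -(∑ i, y i * v i) := by
              rw [hc, div_mul_cancel₀ _ (hv a)]
            rw [this, h2]
            simp [hya]
          · funext i
            by_cases hia : i = a
            · subst hia; simp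
            · simp [Function.update_of_ne hia]
        refine ⟨?_, hsum⟩
        intro i
        by_cases hia : i = a
        · subst hia; simp [hcne]
        · simp only [Function.update_of_ne hia]
          rw [hsupp i, Finset.mem_insert]
          simp [hia]
      · intro x hx
        simp only [Finset.mem_filter, Finset.mem_univ, true_and] at hx
        obtain ⟨hsupp, hdot⟩ := hx
        have hxa : x a ≠ 0 := (hsupp a).2 (Finset.mem_insert_self a s)
        have hsum : ∑ i, Function.update x a 0 i * v i = - (x a * v a) := by
          rw [show (fun i => Function.update x a 0 i * v i)
              = Function.update (fun i => x i * v i) a 0 from ?_]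
          · rw [Finset.sum_update_of_mem (Finset.mem_univ a)]
            have := Finset.sum_eq_sum_sdiff_singleton_add (Finset.mem_univ a)
              (fun i => x i * v i)
            rw [this] at hdot
            linear_combination hdot
          · funext i
            by_cases hia : i = a
            · subst hia; simp
            · simp [Function.update_of_ne hia]
        rw [hsum]
        have : -(-(x a * v a)) / v a = x a := by
          rw [neg_neg, mul_div_assoc, div_self (hv a), mul_one]
        rw [this, Function.update_idem, Function.update_eq_self]
      · intro y hy
        simp only [Finset.mem_filter, Finset.mem_univ, true_and] at hy
        have hya : y a = 0 := by
          by_contra h; exact ha ((hy.1 a).1 h)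
        rw [Function.update_idem, ← hya, Function.update_eq_self]
    -- card Q = (q-1)^|s| - N s
    have hsplit : (Finset.univ.filter fun x : Fin k → F =>
          (∀ i, x i ≠ 0 ↔ i ∈ s) ∧ ∑ i, x i * v i = 0).card
        + (Finset.univ.filter fun x : Fin k → F =>
          (∀ i, x i ≠ 0 ↔ i ∈ s) ∧ ∑ i, x i * v i ≠ 0).card
        = (Fintype.card F - 1) ^ s.card := by
      rw [← card_supp_eq (F := F) s]
      rw [← Finset.filter_filter, ← Finset.filter_filter]
      exact Finset.card_filter_add_card_filter_not _
    have hq1 : 1 ≤ Fintype.card F := Fintype.card_pos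
    have hZ : ((Finset.univ.filter fun x : Fin k → F =>
          (∀ i, x i ≠ 0 ↔ i ∈ s) ∧ ∑ i, x i * v i = 0).card : ℤ)
        + ((Finset.univ.filter fun x : Fin k → F =>
          (∀ i, x i ≠ 0 ↔ i ∈ s) ∧ ∑ i, x i * v i ≠ 0).card : ℤ)
        = ((Fintype.card F : ℤ) - 1) ^ s.card := by
      have := congrArg (Nat.cast : ℕ → ℤ) hsplit
      push_cast [Nat.cast_sub hq1] at this
      exact this
    rw [hbij, Finset.card_insert_of_notMem ha]
    linear_combination (Fintype.card F : ℤ) * hZ - ih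
lemma count_wt {F : Type*} [Field F] [Fintype F] {k : ℕ} (j : ℕ) :
    (Finset.univ.filter fun x : Fin k → F => hammingNorm x = j).card
      = k.choose j * (Fintype.card F - 1) ^ j := by
  have hnorm : ∀ x : Fin k → F, hammingNorm x = (Finset.univ.filter fun i => x i ≠ 0).card := by
    intro x; rfl
  rw [Finset.card_eq_sum_card_fiberwise
    (f := fun x : Fin k → F => Finset.univ.filter fun i => x i ≠ 0)
    (t := Finset.powersetCard j Finset.univ) ?_]
  · have hfib : ∀ S ∈ Finset.powersetCard j (Finset.univ : Finset (Fin k)),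
        ((Finset.univ.filter fun x : Fin k → F => hammingNorm x = j).filter
          fun x => (Finset.univ.filter fun i => x i ≠ 0) = S).card
        = (Fintype.card F - 1) ^ j := by
      intro S hS
      rw [Finset.mem_powersetCard] at hS
      have : ((Finset.univ.filter fun x : Fin k → F => hammingNorm x = j).filter
          fun x => (Finset.univ.filter fun i => x i ≠ 0) = S)
          = Finset.univ.filter fun x : Fin k → F => ∀ i, x i ≠ 0 ↔ i ∈ S := by
        ext x
        simp only [Finset.mem_filter, Finset.mem_univ, true_and]
        constructor
        · rintro ⟨-, hsupp⟩ i
          rw [← hsupp]; simp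
        · intro h
          have hsupp : (Finset.univ.filter fun i => x i ≠ 0) = S := by
            ext i; simp [h i]
          refine ⟨?_, hsupp⟩
          rw [hnorm, hsupp, hS.2]
      rw [this, card_supp_eq, hS.2]
    rw [Finset.sum_congr rfl hfib, Finset.sum_const, Finset.card_powersetCard,
      Finset.card_univ, Fintype.card_fin, smul_eq_mul]
  · intro x hx
    simp only [Finset.mem_coe, Finset.mem_filter, Finset.mem_univ, true_and] at hx
    rw [Finset.mem_coe, Finset.mem_powersetCard]
    exact ⟨Finset.subset_univ _, by rw [← hnorm, hx]⟩

lemma count_wt_dot {F : Type*} [Field F] [Fintype F] {k : ℕ}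
    (v : Fin k → F) (hv : ∀ j, v j ≠ 0) (j : ℕ) :
    (Fintype.card F : ℤ) *
      (Finset.univ.filter fun x : Fin k → F =>
        hammingNorm x = j ∧ ∑ i, x i * v i = 0).card
      = (k.choose j : ℤ) *
        (((Fintype.card F : ℤ) - 1) ^ j + (-1) ^ j * ((Fintype.card F : ℤ) - 1)) := by
  have hnorm : ∀ x : Fin k → F, hammingNorm x = (Finset.univ.filter fun i => x i ≠ 0).card := by
    intro x; rfl
  rw [Finset.card_eq_sum_card_fiberwise
    (f := fun x : Fin k → F => Finset.univ.filter fun i => x i ≠ 0)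
    (t := Finset.powersetCard j Finset.univ) ?_]
  · push_cast
    rw [Finset.mul_sum]
    have hfib : ∀ S ∈ Finset.powersetCard j (Finset.univ : Finset (Fin k)),
        (Fintype.card F : ℤ) *
          ((Finset.univ.filter fun x : Fin k → F =>
            hammingNorm x = j ∧ ∑ i, x i * v i = 0).filter
            fun x => (Finset.univ.filter fun i => x i ≠ 0) = S).card
        = ((Fintype.card F : ℤ) - 1) ^ j + (-1) ^ j * ((Fintype.card F : ℤ) - 1) := by
      intro S hS
      rw [Finset.mem_powersetCard] at hS
      have : ((Finset.univ.filter fun x : Fin k → F =>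
            hammingNorm x = j ∧ ∑ i, x i * v i = 0).filter
            fun x => (Finset.univ.filter fun i => x i ≠ 0) = S)
          = Finset.univ.filter fun x : Fin k → F =>
              (∀ i, x i ≠ 0 ↔ i ∈ S) ∧ ∑ i, x i * v i = 0 := by
        ext x
        simp only [Finset.mem_filter, Finset.mem_univ, true_and]
        constructor
        · rintro ⟨⟨-, hdot⟩, hsupp⟩
          exact ⟨fun i => by rw [← hsupp]; simp, hdot⟩
        · rintro ⟨h, hdot⟩
          have hsupp : (Finset.univ.filter fun i => x i ≠ 0) = S := by
            ext i; simp [h i]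
          exact ⟨⟨by rw [hnorm, hsupp, hS.2], hdot⟩, hsupp⟩
      rw [this, card_supp_dot_eq v hv, hS.2]
    rw [Finset.sum_congr rfl hfib, Finset.sum_const, Finset.card_powersetCard,
      Finset.card_univ, Fintype.card_fin, nsmul_eq_mul]
  · intro x hx
    simp only [Finset.mem_coe, Finset.mem_filter, Finset.mem_univ, true_and] at hx
    rw [Finset.mem_coe, Finset.mem_powersetCard]
    exact ⟨Finset.subset_univ _, by rw [← hnorm, hx.1]⟩

lemma Emap_apply {F : Type*} [Field F] {n k : ℕ} (v : Fin k → F) (x : Fin k → F) (i : Fin n) :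
    Emap F n k v x i = if h : (i : ℕ) < k then x ⟨i, h⟩
      else if (i : ℕ) = k then ∑ j, x j * v j else 0 := rfl

lemma norm_Emap {F : Type*} [Field F] [Fintype F] {n k : ℕ} (hkn : k + 1 ≤ n)
    (v : Fin k → F) (x : Fin k → F) :
    hammingNorm (Emap F n k v x)
      = hammingNorm x + (if (∑ j, x j * v j) = 0 then 0 else 1) := by
  classical
  set f : ℕ → ℕ := fun m =>
    if h : m < k then (if x ⟨m, h⟩ ≠ 0 then 1 else 0)
    else if m = k then (if (∑ j, x j * v j) ≠ 0 then 1 else 0) else 0 with hf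
  have h1 : hammingNorm (Emap F n k v x) = ∑ i : Fin n, f (i : ℕ) := by
    show (Finset.univ.filter fun i : Fin n => Emap F n k v x i ≠ 0).card = _
    rw [Finset.card_filter]
    refine Finset.sum_congr rfl fun i _ => ?_
    rw [Emap_apply, hf]
    by_cases h : (i : ℕ) < k
    · simp only [h, dif_pos]
    · by_cases h2 : (i : ℕ) = k <;> simp [h, h2]
  rw [h1, Fin.sum_univ_eq_sum_range f n]
  have h2 : ∑ m ∈ Finset.range n, f m = ∑ m ∈ Finset.range (k + 1), f m := by
    symm
    apply Finset.sum_subset (Finset.range_subset_range.2 hkn)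
    intro m _ hm
    rw [Finset.mem_range, not_lt] at hm
    have hmk : ¬ m < k := by omega
    have hmk2 : m ≠ k := by omega
    simp [hf, hmk, hmk2]
  rw [h2, Finset.sum_range_succ]
  have h3 : ∑ m ∈ Finset.range k, f m = hammingNorm x := by
    rw [← Fin.sum_univ_eq_sum_range f k]
    show _ = (Finset.univ.filter fun i : Fin k => x i ≠ 0).card
    rw [Finset.card_filter]
    refine Finset.sum_congr rfl fun i _ => ?_
    simp [hf, i.isLt]
  have h4 : f k = if (∑ j, x j * v j) = 0 then 0 else 1 := by
    simp only [hf, lt_irrefl, dif_neg, not_false_iff, if_pos rfl]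
    split_ifs with h' h'' <;> simp_all
  rw [h3, h4]

lemma weightCount_Ecode_eq {F : Type*} [Field F] [Fintype F] {n k : ℕ} (hkn : k + 1 ≤ n)
    (v : Fin k → F) (i : ℕ) :
    weightCount (Ecode F n k v) i
      = (Finset.univ.filter fun x : Fin k → F => hammingNorm (Emap F n k v x) = i).card := by
  classical
  have hk : k ≤ n := by omega
  have hproj : ∀ x : Fin k → F,
      (fun m : Fin k => Emap F n k v x (Fin.castLE hk m)) = x := by
    intro x; funext m
    rw [Emap_apply]
    simp [m.isLt]
  unfold weightCount
  symm
  apply Finset.card_bij'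
    (fun x _ => (⟨Emap F n k v x, ⟨x, rfl⟩⟩ : Ecode F n k v))
    (fun c _ => fun m : Fin k => (c : Fin n → F) (Fin.castLE hk m))
  · intro x hx
    simp only [Finset.mem_filter, Finset.mem_univ, true_and] at hx ⊢
    exact hx
  · intro c hc
    simp only [Finset.mem_filter, Finset.mem_univ, true_and] at hc ⊢
    obtain ⟨y, hy⟩ := c.2
    have : (fun m : Fin k => (c : Fin n → F) (Fin.castLE hk m)) = y := by
      rw [← hy]; exact hproj y
    rw [this, hy]
    exact hc
  · intro x _
    exact hproj x
  · intro c hc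
    obtain ⟨y, hy⟩ := c.2
    apply Subtype.ext
    have : (fun m : Fin k => (c : Fin n → F) (Fin.castLE hk m)) = y := by
      rw [← hy]; exact hproj y
    simp only [this, hy]
noncomputable def Gcnt {F : Type*} [Field F] [Fintype F] {k : ℕ} (v : Fin k → F) (w : ℕ) : ℕ :=
  (Finset.univ.filter fun x : Fin k → F => hammingNorm x = w ∧ ∑ i, x i * v i = 0).card

noncomputable def Hcnt {F : Type*} [Field F] [Fintype F] {k : ℕ} (v : Fin k → F) (w : ℕ) : ℕ :=
  (Finset.univ.filter fun x : Fin k → F => hammingNorm x = w ∧ ∑ i, x i * v i ≠ 0).card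

lemma GR {F : Type*} [Field F] [Fintype F] {k q : ℕ} (hq : Fintype.card F = q)
    (v : Fin k → F) (hv : ∀ j, v j ≠ 0) (w : ℕ) :
    (Gcnt v w : ℝ) = (1 / (q : ℝ)) * (k.choose w : ℝ) *
      (((q : ℝ) - 1) ^ w + (-1) ^ w * ((q : ℝ) - 1)) := by
  have hq1 : 0 < q := hq ▸ Fintype.card_pos
  have hqR : (q : ℝ) ≠ 0 := Nat.cast_ne_zero.2 hq1.ne'
  have h := count_wt_dot v hv w
  rw [hq] at h
  have hR : (q : ℝ) * (Gcnt v w : ℝ) = (k.choose w : ℝ) *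
      (((q : ℝ) - 1) ^ w + (-1) ^ w * ((q : ℝ) - 1)) := by
    exact_mod_cast congrArg (Int.cast : ℤ → ℝ) h
  field_simp at hR ⊢
  linarith [hR]

lemma HR {F : Type*} [Field F] [Fintype F] {k q : ℕ} (hq : Fintype.card F = q)
    (v : Fin k → F) (hv : ∀ j, v j ≠ 0) (w : ℕ) :
    (Hcnt v w : ℝ) = (k.choose w : ℝ) * ((q : ℝ) - 1) ^ w
      - (1 / (q : ℝ)) * (k.choose w : ℝ) *
        (((q : ℝ) - 1) ^ w + (-1) ^ w * ((q : ℝ) - 1)) := by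
  have hq1 : 1 ≤ q := hq ▸ Fintype.card_pos
  have hsplit : Gcnt v w + Hcnt v w = k.choose w * (q - 1) ^ w := by
    rw [← hq, ← count_wt (F := F) (k := k) w]
    unfold Gcnt Hcnt
    have h2 := Finset.card_filter_add_card_filter_not
      (s := Finset.univ.filter fun x : Fin k → F => hammingNorm x = w)
      (p := fun x => ∑ i, x i * v i = 0)
    rw [Finset.filter_filter, Finset.filter_filter] at h2
    simp only [ne_eq]
    exact h2
  have hR : (Gcnt v w : ℝ) + (Hcnt v w : ℝ) = (k.choose w : ℝ) * ((q : ℝ) - 1) ^ w := by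
    have := congrArg (Nat.cast : ℕ → ℝ) hsplit
    push_cast [Nat.cast_sub hq1] at this
    exact this
  rw [GR hq v hv w] at hR
  linarith [hR]

lemma A_succ {F : Type*} [Field F] [Fintype F] {n k : ℕ} (hkn : k + 1 ≤ n)
    (v : Fin k → F) (w : ℕ) :
    weightCount (Ecode F n k v) (w + 1) = Hcnt v w + Gcnt v (w + 1) := by
  rw [weightCount_Ecode_eq hkn]
  have hsplit : (Finset.univ.filter fun x : Fin k → F =>
        hammingNorm (Emap F n k v x) = w + 1)
      = (Finset.univ.filter fun x : Fin k → F =>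
          hammingNorm x = w ∧ ∑ i, x i * v i ≠ 0)
        ∪ (Finset.univ.filter fun x : Fin k → F =>
          hammingNorm x = w + 1 ∧ ∑ i, x i * v i = 0) := by
    ext x
    simp only [Finset.mem_filter, Finset.mem_univ, true_and, Finset.mem_union]
    rw [norm_Emap hkn]
    by_cases hd : (∑ i, x i * v i) = 0 <;> simp [hd] <;> omega
  rw [hsplit, Finset.card_union_of_disjoint]
  · rfl
  · rw [Finset.disjoint_filter]
    rintro x - ⟨-, hd⟩ ⟨-, hd'⟩
    exact hd hd'
/-- Partial sums of the weight distribution of `E_{n,k,v}` for `v` of full support: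
`Σ_{i=2}^j A_i(E_{n,k,v}) = Σ_{i=1}^{j-1} C(k,i)(q-1)^i + (1/q)·C(k,j)·[(q-1)^j + (-1)^j(q-1)]`. -/
theorem sum_weightCount_Ecode {F : Type*} [Field F] [Fintype F] {n k q : ℕ}
    (hq : Fintype.card F = q) (hkn : k + 1 ≤ n)
    (v : Fin k → F) (hv : ∀ j, v j ≠ 0) :
    ∀ j : ℕ, 2 ≤ j → j ≤ k + 1 →
      (∑ i ∈ Finset.Icc 2 j, (weightCount (Ecode F n k v) i : ℝ)) =
        (∑ i ∈ Finset.Icc 1 (j - 1), (Nat.choose k i : ℝ) * ((q : ℝ) - 1) ^ i) +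
          (1 / (q : ℝ)) * (Nat.choose k j : ℝ) *
            (((q : ℝ) - 1) ^ j + (-1 : ℝ) ^ j * ((q : ℝ) - 1)) := by
  suffices H : ∀ j : ℕ, 2 ≤ j →
      (∑ i ∈ Finset.Icc 2 j, (weightCount (Ecode F n k v) i : ℝ)) =
        (∑ i ∈ Finset.Icc 1 (j - 1), (Nat.choose k i : ℝ) * ((q : ℝ) - 1) ^ i) +
          (1 / (q : ℝ)) * (Nat.choose k j : ℝ) *
            (((q : ℝ) - 1) ^ j + (-1 : ℝ) ^ j * ((q : ℝ) - 1)) by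
    intro j h2 _; exact H j h2
  intro j hj
  induction j, hj using Nat.le_induction with
  | base =>
    rw [show ((2:ℕ) - 1) = 1 from rfl, Finset.Icc_self, Finset.Icc_self,
      Finset.sum_singleton, Finset.sum_singleton]
    rw [show (2:ℕ) = 1 + 1 from rfl, A_succ hkn v 1]
    push_cast
    rw [HR hq v hv 1, GR hq v hv 2]
    ring
  | succ m hm ih =>
    rw [Finset.sum_Icc_succ_top (by omega : 2 ≤ m + 1), ih, A_succ hkn v m]
    push_cast
    rw [HR hq v hv m, GR hq v hv (m + 1)]
    obtain ⟨p, rfl⟩ : ∃ p, m = p + 1 := ⟨m - 1, by omega⟩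
    rw [show (p + 1 - 1) = p from rfl]
    rw [Finset.sum_Icc_succ_top (by omega : 1 ≤ p + 1)]
    ring
end
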